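/- Let 𝕏 ⊂ ℝ^D be a set of points and T = {T_x}_{x∈𝕏}, T̃ = {T̃_x}_{x∈𝕏} two families of linear subspaces of ℝ^D indexed by 𝕏. Assume 𝕏 is δ-sparse and T and T̃ are θ-close, in the sense that inf_{x≠y∈𝕏} ‖y−x‖ ≥ δ > 0 and sup_{x∈𝕏} ‖π_{T_x} − π_{T̃_x}‖_op ≤ sin θ. Then |1/τ̂(𝕏,T) − 1/τ̂(𝕏,T̃)| ≤ 2 sin θ / δ. -/

import Mathlib

open Metric Set ENNReal

noncomputable section

abbrev Euc (D : ℕ) := EuclideanSpace ℝ (Fin D)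

variable {D : ℕ}

/-- The orthogonal projection onto a linear subspace `K ⊆ ℝ^D`, as an operator `ℝ^D → ℝ^D`. -/
def projOp (K : Submodule ℝ (Euc D)) : Euc D →L[ℝ] Euc D :=
  K.subtypeL.comp (K.orthogonalProjection)

lemma infDist_eq_proj (K : Submodule ℝ (Euc D)) (v : Euc D) :
    Metric.infDist v ↑K = ‖v - projOp K v‖ := by
  apply le_antisymm
  · have : (projOp K v) ∈ (K : Set (Euc D)) := (K.orthogonalProjection v).2
    simpa [dist_eq_norm] using Metric.infDist_le_dist_of_mem this
  · rw [Metric.infDist_eq_iInf]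
    apply le_ciInf
    rintro ⟨w, hw⟩
    rw [dist_eq_norm]
    have : (⨅ x : K, ‖v - x‖) = ‖v - projOp K v‖ := (Submodule.starProjection_minimal (U := K) v).symm
    have h2 : (⨅ x : K, ‖v - x‖) ≤ ‖v - (⟨w, hw⟩ : K)‖ :=
      ciInf_le ⟨0, Set.forall_mem_range.mpr fun _ => norm_nonneg _⟩ _
    simpa [projOp, this] using h2

lemma proj_norm_le (K : Submodule ℝ (Euc D)) (v : Euc D) : ‖projOp K v‖ ≤ ‖v‖ := by
  have h1 : ‖projOp K v‖ = ‖K.orthogonalProjection v‖ := rfl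
  rw [h1]
  calc ‖K.orthogonalProjection v‖ ≤ ‖K.orthogonalProjection‖ * ‖v‖ :=
        (K.orthogonalProjection).le_opNorm v
    _ ≤ 1 * ‖v‖ := by
        gcongr; exact Submodule.orthogonalProjection_norm_le K
    _ = ‖v‖ := one_mul _

lemma infDist_key (K K' : Submodule ℝ (Euc D)) (v : Euc D) (s : ℝ)
    (h : ‖projOp K - projOp K'‖ ≤ s) :
    Metric.infDist v ↑K ≤ Metric.infDist v ↑K' + s * ‖v‖ := by
  set w := projOp K' v with hw
  have hmem : (projOp K w) ∈ (K : Set (Euc D)) := (K.orthogonalProjection w).2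
  have h1 : Metric.infDist v ↑K ≤ ‖v - projOp K w‖ := by
    simpa [dist_eq_norm] using Metric.infDist_le_dist_of_mem hmem
  have hidem : projOp K' w = w := by
    simp only [hw, projOp]
    simp [Submodule.orthogonalProjection_mem_subspace_eq_self, Submodule.starProjection_eq_self_iff]
  have h2 : ‖w - projOp K w‖ ≤ s * ‖v‖ := by
    have : w - projOp K w = (projOp K' - projOp K) w := by
      simp [hidem]
    rw [this]
    calc ‖(projOp K' - projOp K) w‖ ≤ ‖projOp K' - projOp K‖ * ‖w‖ :=
          (projOp K' - projOp K).le_opNorm w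
      _ ≤ s * ‖v‖ := by
          apply mul_le_mul _ (proj_norm_le K' v) (norm_nonneg _)
            (le_trans (norm_nonneg _) (by rwa [norm_sub_rev] at h))
          rwa [norm_sub_rev] at h
  calc Metric.infDist v ↑K ≤ ‖v - projOp K w‖ := h1
    _ ≤ ‖v - w‖ + ‖w - projOp K w‖ := norm_sub_le_norm_sub_add_norm_sub _ _ _
    _ ≤ Metric.infDist v ↑K' + s * ‖v‖ := by
        rw [infDist_eq_proj K' v]; exact add_le_add le_rfl h2

/-- The inverse `1/τ̂(X, T) = sup_{x ≠ y ∈ X} 2 d(y-x, T_x) / ‖y-x‖²` of the plug-in reach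
estimator with a given family `T = {T_x}` of linear subspaces, computed in `[0, ∞]`. -/
def invTauHatFam (X : Set (Euc D)) (T : Euc D → Submodule ℝ (Euc D)) : ℝ≥0∞ :=
  ⨆ x ∈ X, ⨆ y ∈ X, ⨆ _ : x ≠ y,
    ENNReal.ofReal (2 * Metric.infDist (y - x) ↑(T x) / ‖y - x‖ ^ 2)

lemma invTauHat_half (X : Set (Euc D)) (T T' : Euc D → Submodule ℝ (Euc D)) (δ s : ℝ)
    (hδ : 0 < δ) (hs : 0 ≤ s)
    (hsparse : ∀ x ∈ X, ∀ y ∈ X, x ≠ y → δ ≤ ‖y - x‖)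
    (hclose : ∀ x ∈ X, ‖projOp (T x) - projOp (T' x)‖ ≤ s) :
    invTauHatFam X T ≤ invTauHatFam X T' + ENNReal.ofReal (2 * s / δ) := by
  rw [invTauHatFam]
  refine iSup₂_le fun x hx => iSup₂_le fun y hy => iSup_le fun hxy => ?_
  have hδy : δ ≤ ‖y - x‖ := hsparse x hx y hy hxy
  have hny : 0 < ‖y - x‖ := lt_of_lt_of_le hδ hδy
  have key := infDist_key (T x) (T' x) (y - x) s (hclose x hx)
  have h1 : 2 * Metric.infDist (y - x) ↑(T x) / ‖y - x‖ ^ 2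
      ≤ 2 * Metric.infDist (y - x) ↑(T' x) / ‖y - x‖ ^ 2 + 2 * s / δ := by
    have h2 : 2 * Metric.infDist (y - x) ↑(T x) / ‖y - x‖ ^ 2
        ≤ 2 * Metric.infDist (y - x) ↑(T' x) / ‖y - x‖ ^ 2 + 2 * (s * ‖y - x‖) / ‖y - x‖ ^ 2 := by
      rw [← add_div]
      apply div_le_div_of_nonneg_right _ (by positivity)
      nlinarith
    refine h2.trans (add_le_add le_rfl ?_)
    have he : 2 * (s * ‖y - x‖) / ‖y - x‖ ^ 2 = 2 * s / ‖y - x‖ := by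
      field_simp
    rw [he]
    gcongr
  calc ENNReal.ofReal (2 * Metric.infDist (y - x) ↑(T x) / ‖y - x‖ ^ 2)
      ≤ ENNReal.ofReal (2 * Metric.infDist (y - x) ↑(T' x) / ‖y - x‖ ^ 2 + 2 * s / δ) :=
        ENNReal.ofReal_le_ofReal h1
    _ ≤ ENNReal.ofReal (2 * Metric.infDist (y - x) ↑(T' x) / ‖y - x‖ ^ 2)
        + ENNReal.ofReal (2 * s / δ) := ENNReal.ofReal_add_le
    _ ≤ invTauHatFam X T' + ENNReal.ofReal (2 * s / δ) := by
        gcongr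
        rw [invTauHatFam]
        refine le_trans ?_ (le_iSup₂ x hx)
        refine le_trans ?_ (le_iSup₂ y hy)
        exact le_iSup (fun _ : x ≠ y => _) hxy

/-- Proposition `thm:tangent_stability`.
If `𝕏` is `δ`-sparse and the families `T`, `T̃` are `θ`-close (principal angles at most `θ`),
then `|1/τ̂(𝕏,T) - 1/τ̂(𝕏,T̃)| ≤ 2 sin θ / δ`. -/
theorem invTauHat_stability (X : Set (Euc D)) (T T' : Euc D → Submodule ℝ (Euc D))
    (δ θ : ℝ) (hδ : 0 < δ)
    (hsparse : ∀ x ∈ X, ∀ y ∈ X, x ≠ y → δ ≤ ‖y - x‖)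
    (hclose : ∀ x ∈ X, ‖projOp (T x) - projOp (T' x)‖ ≤ Real.sin θ) :
    (invTauHatFam X T - invTauHatFam X T') ⊔ (invTauHatFam X T' - invTauHatFam X T) ≤
      ENNReal.ofReal (2 * Real.sin θ / δ) := by
  rcases X.eq_empty_or_nonempty with rfl | ⟨x0, hx0⟩
  · simp [invTauHatFam]
  · have hs : 0 ≤ Real.sin θ := le_trans (norm_nonneg _) (hclose x0 hx0)
    have hclose' : ∀ x ∈ X, ‖projOp (T' x) - projOp (T x)‖ ≤ Real.sin θ := by
      intro x hx; rw [norm_sub_rev]; exact hclose x hx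
    apply sup_le
    · rw [tsub_le_iff_right, add_comm]
      exact invTauHat_half X T T' δ _ hδ hs hsparse hclose
    · rw [tsub_le_iff_right, add_comm]
      exact invTauHat_half X T' T δ _ hδ hs hsparse hclose'

end
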